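/- Let {k₁, k₂} = {(1,0), (0,3)} in the Krein space (ℝ², [.,.]) with [(x₁,x₂),(y₁,y₂)] = x₁y₁ − x₂y₂, and let U(x₁,x₂) = (−x₁, x₂). Then {k₁, k₂} and {Uk₁, Uk₂} are weaving frames, even though ‖I − U‖_J² = 4 > α/β for the frame bounds α = 1, β = 9. Hence the sufficient condition ‖I − U‖_J² < α/β for wovenness is not necessary. -/

import Mathlib

/-- Vectors of the Krein space `(ℝ², [.,.])` (Euclidean `J`-norm). -/
noncomputable def vR2 (a b : ℝ) : EuclideanSpace ℝ (Fin 2) :=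
  (WithLp.equiv 2 (Fin 2 → ℝ)).symm ![a, b]

/-- The indefinite inner product `[(x₁,x₂),(y₁,y₂)] = x₁y₁ − x₂y₂` on `ℝ²`. -/
noncomputable def kreinR2 (x y : EuclideanSpace ℝ (Fin 2)) : ℝ :=
  x 0 * y 0 - x 1 * y 1

/-- The frame `{k₁, k₂} = {(1,0), (0,3)}`. -/
noncomputable def ksR2' : Fin 2 → EuclideanSpace ℝ (Fin 2) := ![vR2 1 0, vR2 0 3]

lemma vR2_apply0 (a b : ℝ) : vR2 a b 0 = a := rfl
lemma vR2_apply1 (a b : ℝ) : vR2 a b 1 = b := rfl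

lemma norm_sq_R2 (x : EuclideanSpace ℝ (Fin 2)) : ‖x‖ ^ 2 = x 0 ^ 2 + x 1 ^ 2 := by
  rw [EuclideanSpace.norm_eq, Real.sq_sqrt (by positivity)]
  simp [Fin.sum_univ_two, sq_abs]

lemma norm_R2_eq_of_sq (x : EuclideanSpace ℝ (Fin 2)) (c : ℝ) (hc : 0 ≤ c)
    (h : x 0 ^ 2 + x 1 ^ 2 = c ^ 2) : ‖x‖ = c := by
  have := norm_sq_R2 x
  nlinarith [norm_nonneg x]

/-- For `{k₁,k₂} = {(1,0),(0,3)}` in the Krein space `(ℝ², [.,.])`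
with `[(x₁,x₂),(y₁,y₂)] = x₁y₁ − x₂y₂`, and `U(x₁,x₂) = (−x₁, x₂)`: `{k₁,k₂}` and
`{Uk₁,Uk₂}` are weaving frames, even though `‖I − U‖_J² = 4 > α/β = 1/9` for the
frame bounds `α = 1`, `β = 9`. Hence the sufficient condition `‖I − U‖_J² < α/β`
for wovenness is not necessary. -/
theorem weaving_counterexample_R2_U
    (U : EuclideanSpace ℝ (Fin 2) →L[ℝ] EuclideanSpace ℝ (Fin 2))
    (hU : ∀ x : EuclideanSpace ℝ (Fin 2), U x = vR2 (-x 0) (x 1)) :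
    (∃ α β : ℝ, 0 < α ∧ α ≤ β ∧
      ∀ (σ : Finset (Fin 2)) (x : EuclideanSpace ℝ (Fin 2)),
        α * ‖x‖ ^ 2 ≤
          (∑ i ∈ σ, kreinR2 x (ksR2' i) ^ 2) +
            ∑ i ∈ σᶜ, kreinR2 x (U (ksR2' i)) ^ 2 ∧
        (∑ i ∈ σ, kreinR2 x (ksR2' i) ^ 2) +
            ∑ i ∈ σᶜ, kreinR2 x (U (ksR2' i)) ^ 2 ≤ β * ‖x‖ ^ 2) ∧
    ‖(1 : EuclideanSpace ℝ (Fin 2) →L[ℝ] EuclideanSpace ℝ (Fin 2)) - U‖ ^ 2 = 4 ∧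
    ¬ ‖(1 : EuclideanSpace ℝ (Fin 2) →L[ℝ] EuclideanSpace ℝ (Fin 2)) - U‖ ^ 2 <
        (1 : ℝ) / 9 := by
  have hnorm : ‖(1 : EuclideanSpace ℝ (Fin 2) →L[ℝ] EuclideanSpace ℝ (Fin 2)) - U‖ = 2 := by
    have happ : ∀ x : EuclideanSpace ℝ (Fin 2),
        ((1 : EuclideanSpace ℝ (Fin 2) →L[ℝ] EuclideanSpace ℝ (Fin 2)) - U) x
          = vR2 (2 * x 0) 0 := by
      intro x
      have : ((1 : EuclideanSpace ℝ (Fin 2) →L[ℝ] EuclideanSpace ℝ (Fin 2)) - U) x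
          = x - U x := rfl
      rw [this, hU x]
      ext i
      fin_cases i
      · show x 0 - (-x 0) = 2 * x 0
        ring
      · show x 1 - x 1 = (0 : ℝ)
        ring
    apply le_antisymm
    · apply ContinuousLinearMap.opNorm_le_bound _ (by norm_num)
      intro x
      rw [happ x]
      have h1 : ‖vR2 (2 * x 0) 0‖ = 2 * |x 0| := by
        apply norm_R2_eq_of_sq _ _ (by positivity)
        rw [vR2_apply0, vR2_apply1,
          show (2 * |x 0|) ^ 2 = 4 * x 0 ^ 2 by rw [mul_pow, sq_abs]; ring]
        ring
      rw [h1]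
      have h2 : |x 0| ≤ ‖x‖ := by
        have := norm_sq_R2 x
        nlinarith [norm_nonneg x, abs_nonneg (x 0), sq_abs (x 0), sq_nonneg (x 1)]
      nlinarith [abs_nonneg (x 0)]
    · have he : ‖vR2 1 0‖ = 1 := by
        apply norm_R2_eq_of_sq _ _ (by norm_num)
        rw [vR2_apply0, vR2_apply1]; norm_num
      have := ContinuousLinearMap.le_opNorm
        ((1 : EuclideanSpace ℝ (Fin 2) →L[ℝ] EuclideanSpace ℝ (Fin 2)) - U) (vR2 1 0)
      rw [happ, he, mul_one, vR2_apply0] at this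
      have h1 : ‖vR2 (2 * (1:ℝ)) 0‖ = 2 := by
        apply norm_R2_eq_of_sq _ _ (by norm_num)
        rw [vR2_apply0, vR2_apply1]; norm_num
      linarith [h1 ▸ this]
  refine ⟨⟨1, 9, by norm_num, by norm_num, ?_⟩, by rw [hnorm]; norm_num,
    by rw [hnorm]; norm_num⟩
  intro σ x
  have hsame : ∀ i, kreinR2 x (U (ksR2' i)) ^ 2 = kreinR2 x (ksR2' i) ^ 2 := by
    intro i
    rw [hU]
    fin_cases i <;>
      · unfold kreinR2 ksR2'
        simp [vR2_apply0, vR2_apply1]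
  have hsum : (∑ i ∈ σ, kreinR2 x (ksR2' i) ^ 2) +
      ∑ i ∈ σᶜ, kreinR2 x (U (ksR2' i)) ^ 2 = x 0 ^ 2 + 9 * x 1 ^ 2 := by
    have : (∑ i ∈ σᶜ, kreinR2 x (U (ksR2' i)) ^ 2)
        = ∑ i ∈ σᶜ, kreinR2 x (ksR2' i) ^ 2 := Finset.sum_congr rfl fun i _ => hsame i
    rw [this, Finset.sum_add_sum_compl, Fin.sum_univ_two]
    unfold kreinR2 ksR2'
    simp [vR2_apply0, vR2_apply1]
    ring
  rw [hsum, norm_sq_R2]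
  constructor <;> nlinarith [sq_nonneg (x 0), sq_nonneg (x 1)]
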